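/- Let P be a finite set of real numbers and let S be a finite family of closed intervals in ℝ such that each interval in S contains at least n points of P. Then there exists a subset T ⊆ P of size at most 2n such that every interval in S contains at least n points of T. (One can take T to be the n largest points of P below the smallest right endpoint together with the n smallest points of P above the largest left endpoint, assuming the family is pairwise intersecting on P.) -/

import Mathlib

open scoped Classical

lemma topn {α : Type*} [LinearOrder α] (Q : Finset α) (n : ℕ) :
    ∃ T ⊆ Q, T.card ≤ n ∧ ∀ a : α,
      min n ((Q.filter (fun q => a ≤ q)).card) ≤ ((T.filter (fun q => a ≤ q)).card) := by
  classical
  set rank : α → ℕ := fun q => (Q.filter (fun p => q ≤ p)).card with hrank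
  have hmono : ∀ q ∈ Q, ∀ q' ∈ Q, q < q' → rank q' < rank q := by
    intro q hq q' hq' hlt
    apply Finset.card_lt_card
    constructor
    · intro p hp
      simp only [Finset.mem_filter] at hp ⊢
      exact ⟨hp.1, le_trans hlt.le hp.2⟩
    · intro hsub
      have := hsub (Finset.mem_filter.2 ⟨hq, le_refl q⟩)
      simp only [Finset.mem_filter] at this
      exact absurd this.2 (not_le.2 hlt)
  have hinj : ∀ q ∈ Q, ∀ q' ∈ Q, rank q = rank q' → q = q' := by
    intro q hq q' hq' h
    rcases lt_trichotomy q q' with h1 | h1 | h1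
    · exact absurd h (hmono q hq q' hq' h1).ne'
    · exact h1
    · exact absurd h (hmono q' hq' q hq h1).ne
  have hrank_pos : ∀ q ∈ Q, 1 ≤ rank q := by
    intro q hq
    have : q ∈ Q.filter (fun p => q ≤ p) := Finset.mem_filter.2 ⟨hq, le_refl q⟩
    exact Finset.card_pos.2 ⟨q, this⟩
  refine ⟨Q.filter (fun q => rank q ≤ n), Finset.filter_subset _ _, ?_, ?_⟩
  · have h1 : (Q.filter (fun q => rank q ≤ n)).card ≤ (Finset.Icc 1 n).card := by
      apply Finset.card_le_card_of_injOn rank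
      · intro q hq
        simp only [Finset.coe_filter, Set.mem_setOf_eq] at hq
        exact Finset.mem_Icc.2 ⟨hrank_pos q hq.1, hq.2⟩
      · intro q hq q' hq' h
        simp only [Finset.coe_filter, Set.mem_setOf_eq] at hq hq'
        exact hinj q hq.1 q' hq'.1 h
    simpa using h1
  · intro a
    set Qa := Q.filter (fun q => a ≤ q) with hQa
    have hTa : (Q.filter (fun q => rank q ≤ n)).filter (fun q => a ≤ q)
        = Qa.filter (fun q => rank q ≤ n) := by
      rw [hQa, Finset.filter_filter, Finset.filter_filter]
      exact Finset.filter_congr (fun x _ => by tauto)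
    rw [hTa]
    -- rank restricted to Qa has range inside Icc 1 Qa.card
    have hrange : ∀ q ∈ Qa, rank q ∈ Finset.Icc 1 Qa.card := by
      intro q hq
      simp only [hQa, Finset.mem_filter] at hq
      refine Finset.mem_Icc.2 ⟨hrank_pos q hq.1, ?_⟩
      apply Finset.card_le_card
      intro p hp
      rw [hQa]
      simp only [Finset.mem_filter] at hp ⊢
      exact ⟨hp.1, le_trans hq.2 hp.2⟩
    -- surjectivity onto Icc 1 Qa.card
    have hsurj : ∀ i ∈ Finset.Icc 1 Qa.card, ∃ q ∈ Qa, rank q = i := by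
      have hcard : (Finset.Icc 1 Qa.card).card ≤ Qa.card := by
        simp
      have := Finset.surj_on_of_inj_on_of_card_le (s := Qa) (t := Finset.Icc 1 Qa.card)
        (f := fun q _ => rank q) (fun q hq => hrange q hq)
        (fun q q' hq hq' h => hinj q (Finset.filter_subset _ _ hq) q'
          (Finset.filter_subset _ _ hq') h) hcard
      intro i hi
      obtain ⟨q, hq, h⟩ := this i hi
      exact ⟨q, hq, h.symm⟩
    have himage : Finset.Icc 1 (min n Qa.card) ⊆ (Qa.filter (fun q => rank q ≤ n)).image rank := by
      intro i hi
      simp only [Finset.mem_Icc, le_min_iff] at hi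
      obtain ⟨q, hq, hqi⟩ := hsurj i (Finset.mem_Icc.2 ⟨hi.1, hi.2.2⟩)
      refine Finset.mem_image.2 ⟨q, Finset.mem_filter.2 ⟨hq, ?_⟩, hqi⟩
      rw [hqi]; exact hi.2.1
    calc min n Qa.card = (Finset.Icc 1 (min n Qa.card)).card := by simp
      _ ≤ ((Qa.filter (fun q => rank q ≤ n)).image rank).card := Finset.card_le_card himage
      _ ≤ (Qa.filter (fun q => rank q ≤ n)).card := Finset.card_image_le

lemma botn {α : Type*} [LinearOrder α] (Q : Finset α) (n : ℕ) :
    ∃ T ⊆ Q, T.card ≤ n ∧ ∀ b : α,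
      min n ((Q.filter (fun q => q ≤ b)).card) ≤ ((T.filter (fun q => q ≤ b)).card) :=
  topn (α := αᵒᵈ) Q n


/-- If `P` is a finite set of reals, `S` a finite family of closed intervals such that
any two intervals of `S` share a point of `P` and each interval contains at least `n`
points of `P`, then there is `T ⊆ P` of size at most `2n` such that every interval of
`S` contains at least `n` points of `T`. -/
theorem stmt_0 (n : ℕ) (P : Finset ℝ) (S : Finset (Set ℝ))
    (hint : ∀ s ∈ S, ∃ a b : ℝ, s = Set.Icc a b)
    (hpair : ∀ s ∈ S, ∀ s' ∈ S, ∃ p ∈ P, p ∈ s ∧ p ∈ s')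
    (hn : ∀ s ∈ S, n ≤ (P.filter (fun p => p ∈ s)).card) :
    ∃ T ⊆ P, T.card ≤ 2 * n ∧ ∀ s ∈ S, n ≤ (T.filter (fun p => p ∈ s)).card := by
  rcases Nat.eq_zero_or_pos n with hn0 | hn0
  · exact ⟨∅, Finset.empty_subset _, by simp, fun s hs => by simp [hn0]⟩
  rcases S.eq_empty_or_nonempty with hSe | hS
  · exact ⟨∅, Finset.empty_subset _, by simp, fun s hs => by simp [hSe] at hs⟩
  -- every interval is nonempty and is Icc of its sInf and sSup
  have hrep : ∀ s ∈ S, s = Set.Icc (sInf s) (sSup s) ∧ sInf s ≤ sSup s := by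
    intro s hs
    obtain ⟨a, b, hab⟩ := hint s hs
    have hne : (P.filter (fun p => p ∈ s)).Nonempty :=
      Finset.card_pos.1 (lt_of_lt_of_le hn0 (hn s hs))
    obtain ⟨p, hp⟩ := hne
    have hps : p ∈ s := (Finset.mem_filter.1 hp).2
    have hab' : a ≤ b := by
      rw [hab] at hps; exact le_trans hps.1 hps.2
    have h1 : sInf s = a := by rw [hab]; exact csInf_Icc hab'
    have h2 : sSup s = b := by rw [hab]; exact csSup_Icc hab'
    rw [h1, h2]
    exact ⟨hab, hab'⟩
  set ℓ : ℝ := S.sup' hS sInf with hℓ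
  set r : ℝ := S.inf' hS sSup with hr
  have hℓr : ℓ ≤ r := by
    obtain ⟨s₁, hs₁, h1⟩ := Finset.exists_mem_eq_sup' hS sInf
    obtain ⟨s₂, hs₂, h2⟩ := Finset.exists_mem_eq_inf' hS sSup
    obtain ⟨p, _, hp1, hp2⟩ := hpair s₁ hs₁ s₂ hs₂
    have e1 := (hrep s₁ hs₁).1
    have e2 := (hrep s₂ hs₂).1
    rw [e1] at hp1; rw [e2] at hp2
    rw [hℓ, hr, h1, h2]
    exact le_trans hp1.1 hp2.2
  obtain ⟨T₁, hT₁sub, hT₁card, hT₁⟩ := topn (P.filter (fun p => p ≤ r)) n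
  obtain ⟨T₂, hT₂sub, hT₂card, hT₂⟩ := botn (P.filter (fun p => ℓ ≤ p)) n
  refine ⟨T₁ ∪ T₂, ?_, ?_, ?_⟩
  · intro t ht
    rcases Finset.mem_union.1 ht with h | h
    · exact Finset.filter_subset _ _ (hT₁sub h)
    · exact Finset.filter_subset _ _ (hT₂sub h)
  · calc (T₁ ∪ T₂).card ≤ T₁.card + T₂.card := Finset.card_union_le _ _
      _ ≤ 2 * n := by omega
  · intro s hs
    obtain ⟨hse, hab⟩ := hrep s hs
    set a := sInf s with ha
    set b := sSup s with hb
    have haℓ : a ≤ ℓ := Finset.le_sup' sInf hs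
    have hrb : r ≤ b := Finset.inf'_le sSup hs
    by_cases h1 : n ≤ ((P.filter (fun p => p ≤ r)).filter (fun q => a ≤ q)).card
    · -- T₁ already gives n points inside s
      have hmin := hT₁ a
      rw [min_eq_left h1] at hmin
      refine le_trans hmin (Finset.card_le_card ?_)
      intro t ht
      simp only [Finset.mem_filter] at ht ⊢
      have htP := Finset.mem_filter.1 (hT₁sub ht.1)
      refine ⟨Finset.mem_union_left _ ht.1, ?_⟩
      rw [hse]
      exact ⟨ht.2, le_trans htP.2 hrb⟩
    by_cases h2 : n ≤ ((P.filter (fun p => ℓ ≤ p)).filter (fun q => q ≤ b)).card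
    · have hmin := hT₂ b
      rw [min_eq_left h2] at hmin
      refine le_trans hmin (Finset.card_le_card ?_)
      intro t ht
      simp only [Finset.mem_filter] at ht ⊢
      have htP := Finset.mem_filter.1 (hT₂sub ht.1)
      refine ⟨Finset.mem_union_right _ ht.1, ?_⟩
      rw [hse]
      exact ⟨le_trans haℓ htP.2, ht.2⟩
    · -- every point of P in s belongs to T₁ ∪ T₂
      push_neg at h1 h2
      have hX : (P.filter (fun p => p ≤ r)).filter (fun q => a ≤ q) ⊆ T₁ := by
        have hmin := hT₁ a
        rw [min_eq_right (le_of_lt h1)] at hmin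
        have hsub : T₁.filter (fun q => a ≤ q) ⊆
            (P.filter (fun p => p ≤ r)).filter (fun q => a ≤ q) :=
          Finset.filter_subset_filter _ hT₁sub
        have heq := (Finset.eq_of_subset_of_card_le hsub hmin).symm
        intro p hp
        exact Finset.filter_subset _ _ (heq ▸ hp)
      have hY : (P.filter (fun p => ℓ ≤ p)).filter (fun q => q ≤ b) ⊆ T₂ := by
        have hmin := hT₂ b
        rw [min_eq_right (le_of_lt h2)] at hmin
        have hsub : T₂.filter (fun q => q ≤ b) ⊆
            (P.filter (fun p => ℓ ≤ p)).filter (fun q => q ≤ b) :=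
          Finset.filter_subset_filter _ hT₂sub
        have heq := (Finset.eq_of_subset_of_card_le hsub hmin).symm
        intro p hp
        exact Finset.filter_subset _ _ (heq ▸ hp)
      refine le_trans (hn s hs) (Finset.card_le_card ?_)
      intro p hp
      simp only [Finset.mem_filter] at hp ⊢
      refine ⟨Finset.mem_union.2 ?_, hp.2⟩
      have hps := hp.2
      rw [hse] at hps
      rcases le_or_gt p r with hpr | hpr
      · left
        exact hX (Finset.mem_filter.2 ⟨Finset.mem_filter.2 ⟨hp.1, hpr⟩, hps.1⟩)
      · right
        exact hY (Finset.mem_filter.2 ⟨Finset.mem_filter.2 ⟨hp.1, le_of_lt (lt_of_le_of_lt hℓr hpr)⟩, hps.2⟩)
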